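/- Let t₁, t₂, t₃, κ > 0 and w₁, w₂ > 0, set w₃ = w₁ + w₂ and t_s = t₁ + t₂ + t₃. Suppose (z₁, z₂, z₃, y) ∈ ℝ⁴ with y > 0 satisfies the system: t₁(1−z₁²)/(1+z₁²) + t₂(1−z₂²)/(1+z₂²) + t₃(1−z₃²)/(1+z₃²) + κy = 0, t₁z₁/(1+z₁²) + t₂z₂/(1+z₂²) + t₃z₃/(1+z₃²) = 0, −z₁(z₁²+3) + z₃(z₃²+3) = w₁y³, and z₂(z₂²+3) − z₃(z₃²+3) = w₂y³. Then y ≥ 4^{1/3}/w₃^{1/3}, and the quantity u = (t_s/κ)·(w₃/2)^{1/3} satisfies u ≥ 3. -/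

import Mathlib

private lemma aux_poly (m : ℝ) (hm : 1 ≤ m) :
    54 * ((m^2 - 1) / (m^2 + 1))^3 ≤ m * (m^2 + 3) := by
  have h2 : 54 * (m^2-1)^3 ≤ m*(m^2+3)*(m^2+1)^3 := by
    obtain ⟨s, hs, rfl⟩ : ∃ s, 0 ≤ s ∧ m = 1 + s := ⟨m-1, by linarith, by ring⟩
    nlinarith [sq_nonneg (6*s^2 - 21/2), mul_nonneg hs (sq_nonneg (s^2+3*s-4)),
      mul_nonneg (mul_nonneg hs hs) (sq_nonneg (s^2-1)),
      mul_nonneg hs (sq_nonneg (s^3+4*s^2-2)), sq_nonneg s, mul_nonneg hs hs,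
      mul_nonneg hs (mul_nonneg hs hs)]
  have hpos : (0:ℝ) < (m^2+1)^3 := by positivity
  rw [div_pow, ← mul_div_assoc, div_le_iff₀ hpos]
  nlinarith [h2]

private lemma aux_phi4 (m : ℝ) (hm : 1 ≤ m) : 4 ≤ m*(m^2+3) := by nlinarith [sq_nonneg (m-1)]

private lemma aux_l27 (a k T : ℝ) (hk : 0 < k) (e : a*(2*k) = T) (h : 54*k ≤ T) : 27 ≤ a := by
  nlinarith

private lemma aux_cube (u : ℝ) (hu : 0 < u) (h : 27 ≤ u^3) : 3 ≤ u := by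
  nlinarith [sq_nonneg (u-3), sq_nonneg (u+3)]

set_option maxHeartbeats 1000000 in
/-- Necessary conditions for the reduced critical-point system of a doublet with line
tension to have a real solution with `y > 0`: `y ≥ 4^{1/3}/w₃^{1/3}` and
`u = (t_s/κ)(w₃/2)^{1/3} ≥ 3`. -/
theorem stmt_17 (t₁ t₂ t₃ κ w₁ w₂ : ℝ) (ht₁ : 0 < t₁) (ht₂ : 0 < t₂) (ht₃ : 0 < t₃)
    (hκ : 0 < κ) (hw₁ : 0 < w₁) (hw₂ : 0 < w₂)
    (z₁ z₂ z₃ y : ℝ) (hy : 0 < y)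
    (heq₁ : t₁ * (1 - z₁ ^ 2) / (1 + z₁ ^ 2) + t₂ * (1 - z₂ ^ 2) / (1 + z₂ ^ 2) +
      t₃ * (1 - z₃ ^ 2) / (1 + z₃ ^ 2) + κ * y = 0)
    (heq₂ : t₁ * z₁ / (1 + z₁ ^ 2) + t₂ * z₂ / (1 + z₂ ^ 2) + t₃ * z₃ / (1 + z₃ ^ 2) = 0)
    (heq₃ : -z₁ * (z₁ ^ 2 + 3) + z₃ * (z₃ ^ 2 + 3) = w₁ * y ^ 3)
    (heq₄ : z₂ * (z₂ ^ 2 + 3) - z₃ * (z₃ ^ 2 + 3) = w₂ * y ^ 3) :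
    (4 : ℝ) ^ ((1 : ℝ) / 3) / (w₁ + w₂) ^ ((1 : ℝ) / 3) ≤ y ∧
    3 ≤ (t₁ + t₂ + t₃) / κ * ((w₁ + w₂) / 2) ^ ((1 : ℝ) / 3) := by
  have hd₁ : (0:ℝ) < 1 + z₁^2 := by positivity
  have hd₂ : (0:ℝ) < 1 + z₂^2 := by positivity
  have hd₃ : (0:ℝ) < 1 + z₃^2 := by positivity
  have hy3 : (0:ℝ) < y^3 := pow_pos hy 3
  have hw3 : (0:ℝ) < w₁ + w₂ := by linarith
  have hts : (0:ℝ) < t₁ + t₂ + t₃ := by linarith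
  -- ordering z₁ < z₃ < z₂
  have hlt : ∀ a b : ℝ, a*(a^2+3) < b*(b^2+3) → a < b := by
    intro a b h
    by_contra hab
    push_neg at hab
    nlinarith [sq_nonneg (a+b), sq_nonneg (a-b)]
  have h13 : z₁ < z₃ := hlt _ _ (by nlinarith [mul_pos hw₁ hy3])
  have h32 : z₃ < z₂ := hlt _ _ (by nlinarith [mul_pos hw₂ hy3])
  -- signs of z₁, z₂
  have hz₁ : z₁ < 0 := by
    by_contra h
    push_neg at h
    have h3 : 0 < z₃ := lt_of_le_of_lt h h13
    have h2 : 0 < z₂ := lt_trans h3 h32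
    have T1 : 0 ≤ t₁ * z₁ / (1 + z₁^2) := div_nonneg (mul_nonneg ht₁.le h) hd₁.le
    have T2 : 0 < t₂ * z₂ / (1 + z₂^2) := div_pos (mul_pos ht₂ h2) hd₂
    have T3 : 0 < t₃ * z₃ / (1 + z₃^2) := div_pos (mul_pos ht₃ h3) hd₃
    linarith [heq₂]
  have hz₂ : 0 < z₂ := by
    by_contra h
    push_neg at h
    have h3 : z₃ < 0 := h32.trans_le h
    have h1 : z₁ < 0 := h13.trans h3
    have T2 : t₂ * z₂ / (1 + z₂^2) ≤ 0 :=
      div_nonpos_of_nonpos_of_nonneg (mul_nonpos_of_nonneg_of_nonpos ht₂.le h) hd₂.le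
    have T1 : t₁ * z₁ / (1 + z₁^2) < 0 := div_neg_of_neg_of_pos (mul_neg_of_pos_of_neg ht₁ h1) hd₁
    have T3 : t₃ * z₃ / (1 + z₃^2) < 0 := div_neg_of_neg_of_pos (mul_neg_of_pos_of_neg ht₃ h3) hd₃
    linarith [heq₂]
  -- the dominating half-angle tangent m
  set m := max (-z₁) z₂ with hm_def
  have hm1 : -z₁ ≤ m := le_max_left _ _
  have hm2 : z₂ ≤ m := le_max_right _ _
  have hm0 : 0 < m := lt_of_lt_of_le hz₂ hm2
  have hzm1 : z₁^2 ≤ m^2 := sq_le_sq' (by linarith) (by linarith)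
  have hzm2 : z₂^2 ≤ m^2 := sq_le_sq' (by linarith) (by linarith)
  have hzm3 : z₃^2 ≤ m^2 := sq_le_sq' (by linarith) (by linarith)
  have hdm : (0:ℝ) < m^2 + 1 := by positivity
  -- κ y expressed from heq₁
  have hky : κ * y = t₁*((z₁^2-1)/(1+z₁^2)) + t₂*((z₂^2-1)/(1+z₂^2)) + t₃*((z₃^2-1)/(1+z₃^2)) := by
    linear_combination heq₁
  have key : ∀ z : ℝ, z^2 ≤ m^2 → (z^2-1)/(1+z^2) ≤ (m^2-1)/(m^2+1) := by
    intro z hz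
    rw [div_le_div_iff₀ (by positivity) hdm]
    nlinarith
  have hS : κ * y ≤ (t₁+t₂+t₃) * ((m^2-1)/(m^2+1)) := by
    have k1 := mul_le_mul_of_nonneg_left (key z₁ hzm1) ht₁.le
    have k2 := mul_le_mul_of_nonneg_left (key z₂ hzm2) ht₂.le
    have k3 := mul_le_mul_of_nonneg_left (key z₃ hzm3) ht₃.le
    have : (t₁+t₂+t₃) * ((m^2-1)/(m^2+1)) =
        t₁*((m^2-1)/(m^2+1)) + t₂*((m^2-1)/(m^2+1)) + t₃*((m^2-1)/(m^2+1)) := by ring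
    rw [hky, this]
    linarith
  have hκy : 0 < κ * y := mul_pos hκ hy
  have hM0 : 0 < (m^2-1)/(m^2+1) := by
    by_contra h
    push_neg at h
    have : (t₁+t₂+t₃) * ((m^2-1)/(m^2+1)) ≤ 0 := mul_nonpos_of_nonneg_of_nonpos hts.le h
    linarith
  have hm_gt1 : 1 < m := by
    by_contra h
    push_neg at h
    have hm21 : m^2 ≤ 1 := pow_le_one₀ hm0.le h
    have : (m^2-1)/(m^2+1) ≤ 0 := div_nonpos_of_nonpos_of_nonneg (by linarith) hdm.le
    linarith
  -- volume
  have hvol : z₂*(z₂^2+3) - z₁*(z₁^2+3) = (w₁+w₂)*y^3 := by linear_combination heq₃ + heq₄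
  have hphi : m*(m^2+3) ≤ (w₁+w₂)*y^3 := by
    have hp2 : 0 < z₂*(z₂^2+3) := mul_pos hz₂ (by positivity)
    have hp1 : z₁*(z₁^2+3) < 0 := mul_neg_of_neg_of_pos hz₁ (by positivity)
    rcases max_choice (-z₁) z₂ with h | h <;> rw [hm_def, h]
    · have e : (-z₁)*((-z₁)^2+3) = -(z₁*(z₁^2+3)) := by ring
      linarith
    · linarith
  -- claim 1
  have h4 : 4 ≤ (w₁+w₂)*y^3 := le_trans (aux_phi4 m hm_gt1.le) hphi
  have claim1 : (4 : ℝ) ^ ((1 : ℝ) / 3) / (w₁ + w₂) ^ ((1 : ℝ) / 3) ≤ y := by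
    have e1 : (4 : ℝ) ^ ((1 : ℝ) / 3) / (w₁ + w₂) ^ ((1 : ℝ) / 3)
        = (4/(w₁+w₂)) ^ ((1:ℝ)/3) := (Real.div_rpow (by norm_num : (0:ℝ) ≤ 4) hw3.le ((1:ℝ)/3)).symm
    have h1 : 4/(w₁+w₂) ≤ y^3 := by rw [div_le_iff₀ hw3]; linarith [h4]
    have h2 : (4/(w₁+w₂))^((1:ℝ)/3) ≤ (y^3)^((1:ℝ)/3) :=
      Real.rpow_le_rpow (by positivity) h1 (by norm_num)
    have h3 : (y^3 : ℝ)^((1:ℝ)/3) = y := by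
      rw [← Real.rpow_natCast y 3, ← Real.rpow_mul hy.le]
      norm_num
    rw [e1, ← h3]
    exact h2
  -- claim 2
  have h54 : 54*(κ*y)^3 ≤ (t₁+t₂+t₃)^3 * ((w₁+w₂)*y^3) := by
    calc 54*(κ*y)^3 ≤ 54*((t₁+t₂+t₃) * ((m^2-1)/(m^2+1)))^3 :=
          mul_le_mul_of_nonneg_left (pow_le_pow_left₀ hκy.le hS 3) (by norm_num)
      _ = (t₁+t₂+t₃)^3 * (54*((m^2-1)/(m^2+1))^3) := by ring
      _ ≤ (t₁+t₂+t₃)^3 * (m*(m^2+3)) :=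
          mul_le_mul_of_nonneg_left (aux_poly m hm_gt1.le) (by positivity)
      _ ≤ (t₁+t₂+t₃)^3 * ((w₁+w₂)*y^3) := mul_le_mul_of_nonneg_left hphi (by positivity)
  have h54' : 54*κ^3 ≤ (t₁+t₂+t₃)^3 * (w₁+w₂) := by
    have hA : 54*κ^3*y^3 ≤ ((t₁+t₂+t₃)^3*(w₁+w₂))*y^3 := by linarith [h54]
    exact le_of_mul_le_mul_right hA hy3
  have claim2 : 3 ≤ (t₁ + t₂ + t₃) / κ * ((w₁ + w₂) / 2) ^ ((1 : ℝ) / 3) := by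
    set u := (t₁ + t₂ + t₃) / κ * ((w₁ + w₂) / 2) ^ ((1 : ℝ) / 3) with hu_def
    have hu0 : 0 < u := by
      have : (0:ℝ) < ((w₁ + w₂) / 2) ^ ((1 : ℝ) / 3) := Real.rpow_pos_of_pos (by linarith) _
      exact mul_pos (div_pos hts hκ) this
    have hcube : (((w₁+w₂)/2) ^ ((1:ℝ)/3))^(3:ℕ) = (w₁+w₂)/2 := by
      rw [← Real.rpow_natCast (((w₁+w₂)/2) ^ ((1:ℝ)/3)) 3, ← Real.rpow_mul (by positivity)]
      norm_num
    have hu3 : u^3 = ((t₁+t₂+t₃)/κ)^3 * ((w₁+w₂)/2) := by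
      rw [hu_def, mul_pow, hcube]
    have e1 : u^3 * (2*κ^3) = (t₁+t₂+t₃)^3 * (w₁+w₂) := by
      rw [hu3]
      field_simp
    exact aux_cube u hu0 (aux_l27 _ _ _ (pow_pos hκ 3) e1 h54')
  exact ⟨claim1, claim2⟩
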